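/- Let T be a tree rooted at r with heavy child u, and suppose there exist two distinct colours c_1, c_2 ∈ L(r) such that for each i ∈ {1,2}, T − T_u admits an L-colouring assigning c_i to r. Then T admits an L-colouring if and only if T_u admits an L-colouring. -/

import Mathlib

/-- Rooted trees with vertices labelled by elements of `V`; the children are
given as an ordered list. -/
inductive LTree (V : Type) : Type where
  | node : V → List (LTree V) → LTree V

/-- The root (label) of a labelled rooted tree. -/
def LTree.root {V : Type} : LTree V → V
  | .node v _ => v

mutual
  /-- `LTree.Colors L c t` : the assignment `c` is a proper `L`-colouring of the
  tree `t`, i.e. every vertex gets a colour from its list and adjacent vertices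
  (parent/child pairs) get distinct colours. -/
  def LTree.Colors {V : Type} (L : V → Finset ℕ) (c : V → ℕ) : LTree V → Prop
    | .node v cs => c v ∈ L v ∧ (∀ t ∈ cs, c t.root ≠ c v) ∧ LTree.ColorsList L c cs
  def LTree.ColorsList {V : Type} (L : V → Finset ℕ) (c : V → ℕ) : List (LTree V) → Prop
    | [] => True
    | t :: ts => LTree.Colors L c t ∧ LTree.ColorsList L c ts
end

mutual
  /-- The list of labels of the vertices of a labelled rooted tree. -/
  def LTree.labels {V : Type} : LTree V → List V
    | .node v cs => v :: LTree.labelsList cs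
  def LTree.labelsList {V : Type} : List (LTree V) → List V
    | [] => []
    | t :: ts => LTree.labels t ++ LTree.labelsList ts
end

mutual
  /-- Number of vertices of a labelled rooted tree. -/
  def LTree.size {V : Type} : LTree V → ℕ
    | .node _ cs => 1 + LTree.sizeList cs
  def LTree.sizeList {V : Type} : List (LTree V) → ℕ
    | [] => 0
    | t :: ts => LTree.size t + LTree.sizeList ts
end

/-- The `i`th child in the list `cs` of children subtrees is *heavy* if its
subtree is at least as large as every other child's subtree, with strict
inequality for children preceding it in the order. -/
def LHeavyIdx {V : Type} (cs : List (LTree V)) (i : Fin cs.length) : Prop :=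
  ∀ j : Fin cs.length,
    (cs.get j).size ≤ (cs.get i).size ∧ (j < i → (cs.get j).size < (cs.get i).size)

theorem LTree.labelsList_append {V : Type} (a b : List (LTree V)) :
    LTree.labelsList (a ++ b) = LTree.labelsList a ++ LTree.labelsList b := by
  induction a with
  | nil => simp [LTree.labelsList]
  | cons t ts ih => simp [LTree.labelsList, ih]

theorem LTree.mem_labelsList_of_mem {V : Type} {t : LTree V} {cs : List (LTree V)}
    (ht : t ∈ cs) {w : V} (hw : w ∈ t.labels) : w ∈ LTree.labelsList cs := by
  induction cs with
  | nil => cases ht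
  | cons s ss ih =>
    simp only [LTree.labelsList, List.mem_append]
    rcases List.mem_cons.1 ht with rfl | h
    · exact Or.inl hw
    · exact Or.inr (ih h)

theorem LTree.root_mem_labels {V : Type} (t : LTree V) : t.root ∈ t.labels := by
  cases t with
  | node v cs => simp [LTree.root, LTree.labels]

theorem LTree.colorsList_append {V : Type} (L : V → Finset ℕ) (c : V → ℕ)
    (a b : List (LTree V)) :
    LTree.ColorsList L c (a ++ b) ↔ LTree.ColorsList L c a ∧ LTree.ColorsList L c b := by
  induction a with
  | nil => simp [LTree.ColorsList]
  | cons t ts ih => simp [LTree.ColorsList, ih, and_assoc]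

mutual
theorem LTree.colors_congr {V : Type} (L : V → Finset ℕ) (c c' : V → ℕ) :
    ∀ t : LTree V, (∀ v ∈ t.labels, c v = c' v) → LTree.Colors L c t → LTree.Colors L c' t
  | .node v cs, h, hc => by
    simp only [LTree.Colors, LTree.labels] at hc ⊢
    have hv : c v = c' v := h v (by simp [LTree.labels])
    refine ⟨hv ▸ hc.1, fun t ht => ?_, LTree.colorsList_congr L c c' cs
      (fun w hw => h w (by simp [LTree.labels, hw])) hc.2.2⟩
    have hr : c t.root = c' t.root := h t.root (by
      simp only [LTree.labels, List.mem_cons]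
      exact Or.inr (LTree.mem_labelsList_of_mem ht (LTree.root_mem_labels t)))
    rw [← hr, ← hv]
    exact hc.2.1 t ht
theorem LTree.colorsList_congr {V : Type} (L : V → Finset ℕ) (c c' : V → ℕ) :
    ∀ cs : List (LTree V), (∀ v ∈ LTree.labelsList cs, c v = c' v) →
      LTree.ColorsList L c cs → LTree.ColorsList L c' cs
  | [], _, _ => trivial
  | t :: ts, h, hc => by
    simp only [LTree.ColorsList, LTree.labelsList] at hc ⊢
    exact ⟨LTree.colors_congr L c c' t (fun w hw => h w (by simp only [LTree.labelsList, List.mem_append]; exact Or.inl hw)) hc.1,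
      LTree.colorsList_congr L c c' ts (fun w hw => h w (by simp only [LTree.labelsList, List.mem_append]; exact Or.inr hw)) hc.2⟩
end

/-- Let `T` be the tree rooted at `r` with children subtrees `cs1 ++ u :: cs2`,
where `u` is the heavy child, and suppose there are two distinct colours
`c₁, c₂ ∈ L r` each achievable as the colour of `r` in an `L`-colouring of
`T − T_u`.  Then `T` admits an `L`-colouring iff `T_u` does. -/
theorem noncritical_reduction (V : Type) (r : V) (cs1 cs2 : List (LTree V))
    (u : LTree V) (L : V → Finset ℕ)
    (hnodup : (LTree.node r (cs1 ++ u :: cs2)).labels.Nodup)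
    (hheavy : LHeavyIdx (cs1 ++ u :: cs2)
      ⟨cs1.length, by simp⟩)
    (c₁ c₂ : ℕ) (hne : c₁ ≠ c₂) (h₁ : c₁ ∈ L r) (h₂ : c₂ ∈ L r)
    (hach₁ : ∃ c, LTree.Colors L c (LTree.node r (cs1 ++ cs2)) ∧ c r = c₁)
    (hach₂ : ∃ c, LTree.Colors L c (LTree.node r (cs1 ++ cs2)) ∧ c r = c₂) :
    (∃ c, LTree.Colors L c (LTree.node r (cs1 ++ u :: cs2))) ↔
      (∃ c, LTree.Colors L c u) := by
  classical
  constructor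
  · rintro ⟨c, hc⟩
    refine ⟨c, ?_⟩
    have h := hc.2.2
    rw [LTree.colorsList_append] at h
    exact h.2.1
  · rintro ⟨cu, hcu⟩
    obtain ⟨ci, hciL, hcine, c', hc', hc'r⟩ :
        ∃ ci, ci ∈ L r ∧ cu u.root ≠ ci ∧
          ∃ c', LTree.Colors L c' (LTree.node r (cs1 ++ cs2)) ∧ c' r = ci := by
      by_cases h : cu u.root = c₁
      · obtain ⟨c', h1, h2⟩ := hach₂
        exact ⟨c₂, h₂, by rw [h]; exact hne, c', h1, h2⟩
      · obtain ⟨c', h1, h2⟩ := hach₁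
        exact ⟨c₁, h₁, h, c', h1, h2⟩
    -- disjointness facts from nodup
    simp only [LTree.labels, LTree.labelsList_append, LTree.labelsList,
      List.nodup_cons, List.nodup_append, List.mem_append] at hnodup
    have hru : r ∉ u.labels := fun h => hnodup.1 (Or.inr (Or.inl h))
    have hdisj1 : ∀ v ∈ LTree.labelsList cs1, v ∉ u.labels := by
      intro v hv hvu
      exact hnodup.2.2.2 v hv v (by simp [hvu]) rfl
    have hdisj2 : ∀ v ∈ LTree.labelsList cs2, v ∉ u.labels := by
      intro v hv hvu
      exact hnodup.2.2.1.2.2 v hvu v hv rfl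
    set c : V → ℕ := fun v => if v ∈ u.labels then cu v else c' v with hcdef
    have hcr : c r = ci := by simp [hcdef, hru, hc'r]
    have hagree' : ∀ v ∈ (LTree.node r (cs1 ++ cs2)).labels, c' v = c v := by
      intro v hv
      simp only [LTree.labels, LTree.labelsList_append, List.mem_cons,
        List.mem_append] at hv
      have : v ∉ u.labels := by
        rcases hv with rfl | hv | hv
        · exact hru
        · exact hdisj1 v hv
        · exact hdisj2 v hv
      simp [hcdef, this]
    have hagreeu : ∀ v ∈ u.labels, cu v = c v := by
      intro v hv; simp [hcdef, hv]
    have hc'' : LTree.Colors L c (LTree.node r (cs1 ++ cs2)) :=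
      LTree.colors_congr L c' c _ hagree' hc'
    have hcuu : LTree.Colors L c u := LTree.colors_congr L cu c u hagreeu hcu
    have hcur : c u.root = cu u.root := (hagreeu u.root (LTree.root_mem_labels u)).symm
    refine ⟨c, ?_⟩
    simp only [LTree.Colors, LTree.colorsList_append, LTree.ColorsList] at hc'' ⊢
    obtain ⟨hL, hroots, hcl1, hcl2⟩ := hc''
    refine ⟨hL, fun t ht => ?_, hcl1, hcuu, hcl2⟩
    simp only [List.mem_append, List.mem_cons] at ht
    rcases ht with ht | rfl | ht
    · exact hroots t (by simp [ht])
    · rw [hcur, hcr]; exact hcine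
    · exact hroots t (by simp [ht])
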